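/- arXiv:1807.06955 — 2 statements merged into one kernel-verified Lean document; each statement's English description precedes it below -/
import Mathlib

section
/- Let T : M_k(ℂ) → M_k(ℂ) be a positive map and let V_1, V ∈ M_k(ℂ) be orthogonal projections with Im(V_1) ⊆ Im(V) and T(VM_kV) ⊆ VM_kV. If T(V_1M_kV_1) ⊆ V_1M_kV_1, then V T*((V−V_1)M_k(V−V_1)) V ⊆ (V−V_1)M_k(V−V_1). -/
open scoped Kronecker ComplexOrder
open Matrix

noncomputable section

/-- `V` is an orthogonal projection. -/
def IsOrthProj {n : Type*} [Fintype n] (V : Matrix n n ℂ) : Prop :=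
  V.IsHermitian ∧ V * V = V

/-- The corner algebra `V M V` is left invariant by `T`. -/
def LeavesInv {n : Type*} [Fintype n] (T : Matrix n n ℂ → Matrix n n ℂ)
    (V : Matrix n n ℂ) : Prop :=
  ∀ X, T (V * X * V) = V * T (V * X * V) * V

/-- `T` sends positive semidefinite matrices to positive semidefinite matrices. -/
def IsPosMap {n p : Type*} [Fintype n] [Fintype p]
    (T : Matrix n n ℂ → Matrix p p ℂ) : Prop :=
  ∀ X, X.PosSemidef → (T X).PosSemidef

/-- `T` is completely positive, i.e. it has a Kraus decomposition. -/
def IsCPMap {n : Type*} [Fintype n] (T : Matrix n n ℂ → Matrix n n ℂ) : Prop :=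
  ∃ (r : ℕ) (A : Fin r → Matrix n n ℂ), ∀ X, T X = ∑ i, A i * X * (A i)ᴴ

/-- The restriction of `T` to the corner algebra of `V` is irreducible. -/
def IsIrredOn {n : Type*} [Fintype n] [DecidableEq n]
    (T : Matrix n n ℂ → Matrix n n ℂ) (V : Matrix n n ℂ) : Prop :=
  ∀ V' : Matrix n n ℂ, IsOrthProj V' →
    LinearMap.range V'.mulVecLin ≤ LinearMap.range V.mulVecLin →
    LeavesInv T V' → V' = V ∨ V' = 0

/-- `l` is the spectral radius of the restriction of `T` to the corner of `V`. -/
def HasSpecRadOn {n : Type*} [Fintype n] (T : Matrix n n ℂ → Matrix n n ℂ)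
    (V : Matrix n n ℂ) (l : ℝ) : Prop :=
  (∃ (μ : ℂ) (X : Matrix n n ℂ), X ≠ 0 ∧ V * X * V = X ∧ T X = μ • X ∧ ‖μ‖ = l) ∧
  ∀ (μ : ℂ) (X : Matrix n n ℂ), X ≠ 0 → V * X * V = X → T X = μ • X → ‖μ‖ ≤ l

/-- `G_A(X)`: the partial trace over the first factor of `(X ⊗ 1) A`; for
`A = Σ Aᵢ ⊗ Bᵢ` this is `Σ tr(Aᵢ X) Bᵢ`. -/
def Gmap {n p : Type*} [Fintype n] [Fintype p]
    (A : Matrix (n × p) (n × p) ℂ) (X : Matrix n n ℂ) : Matrix p p ℂ :=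
  Matrix.of fun j j' => ∑ i, ∑ l, X i l * A (l, j) (i, j')

/-- Partial transposition on the second tensor factor. -/
def ptr {n p : Type*} (A : Matrix (n × p) (n × p) ℂ) : Matrix (n × p) (n × p) ℂ :=
  Matrix.of fun q r => A (q.1, r.2) (r.1, q.2)

/-- `A` is positive under partial transposition. -/
def IsPPT {n p : Type*} [Fintype n] [Fintype p]
    (A : Matrix (n × p) (n × p) ℂ) : Prop :=
  A.PosSemidef ∧ (ptr A).PosSemidef

/-- Doubly stochastic positive map: `T(Id/√k) = Id/√m` and `T^*(Id/√m) = Id/√k`,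
the latter expressed via the trace characterization of the adjoint. -/
def IsDoublyStochastic {n p : Type*} [Fintype n] [Fintype p] [DecidableEq n] [DecidableEq p]
    (T : Matrix n n ℂ → Matrix p p ℂ) : Prop :=
  IsPosMap T ∧
  T ((Real.sqrt (Fintype.card n) : ℂ)⁻¹ • 1) = (Real.sqrt (Fintype.card p) : ℂ)⁻¹ • 1 ∧
  ∀ X : Matrix n n ℂ,
    (Real.sqrt (Fintype.card p) : ℂ)⁻¹ * (T X).trace
      = (Real.sqrt (Fintype.card n) : ℂ)⁻¹ * X.trace

/-- `T` is equivalent to a doubly stochastic map. -/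
def EquivDS {n p : Type*} [Fintype n] [Fintype p] [DecidableEq n] [DecidableEq p]
    (T : Matrix n n ℂ → Matrix p p ℂ) : Prop :=
  ∃ (R : Matrix n n ℂ) (S : Matrix p p ℂ), IsUnit R ∧ IsUnit S ∧
    IsDoublyStochastic fun X => S * T (R * X * Rᴴ) * Sᴴ

/-- `W` is a solution of Problem 1 subjected to a map with adjoint `Tstar` and
the orthogonal projection `V`. -/
def IsSolutionW {n : Type*} [Fintype n] [DecidableEq n]
    (Tstar : Matrix n n ℂ → Matrix n n ℂ) (V W : Matrix n n ℂ) : Prop :=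
  IsOrthProj W ∧ LeavesInv Tstar W ∧ IsIrredOn Tstar W ∧
    W.rank = V.rank ∧
    LinearMap.ker W.mulVecLin ⊓ LinearMap.range V.mulVecLin = ⊥

/-- The property appearing in item 3 of the main theorem: for every invariant
irreducible corner `V` with spectral radius `l` there is a unique solution `W`
of Problem 1 with spectral radius `l`. -/
def UniqueWProp {n : Type*} [Fintype n] [DecidableEq n]
    (T Tstar : Matrix n n ℂ → Matrix n n ℂ) : Prop :=
  ∀ (V : Matrix n n ℂ) (l : ℝ), IsOrthProj V → LeavesInv T V → IsIrredOn T V →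
    HasSpecRadOn T V l →
    ∃! W : Matrix n n ℂ, IsOrthProj W ∧ LeavesInv Tstar W ∧ IsIrredOn Tstar W ∧
      HasSpecRadOn Tstar W l ∧ W.rank = V.rank ∧
      LinearMap.ker W.mulVecLin ⊓ LinearMap.range V.mulVecLin = ⊥

/-- `ℂ^n` is the (not necessarily orthogonal) direct sum of the images of the `V i`. -/
def IsDirectSumDecomp {n : Type*} [Fintype n] {s : ℕ}
    (V : Fin s → Matrix n n ℂ) : Prop :=
  (⨆ i, LinearMap.range (V i).mulVecLin) = ⊤ ∧
    iSupIndep fun i => LinearMap.range (V i).mulVecLin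


lemma aux_cscalar (c1 c2 s : ℂ) (hs : 0 ≤ s)
    (H : ∀ x : ℂ, 0 ≤ x * c1 + (starRingEnd ℂ) x * c2 + ((starRingEnd ℂ) x * x) * s) :
    c1 = 0 ∧ c2 = 0 := by
  have hsre : 0 ≤ s.re := (Complex.le_def.mp hs).1
  have hsim : s.im = 0 := ((Complex.le_def.mp hs).2).symm
  have key : ∀ x : ℂ, x * c1 + (starRingEnd ℂ) x * c2 = 0 := by
    intro x
    set w : ℂ := x * c1 + (starRingEnd ℂ) x * c2 with hw
    have hb : (starRingEnd ℂ) x * x = (Complex.normSq x : ℂ) := by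
      rw [mul_comm, Complex.mul_conj]
    have hH : ∀ t : ℝ, 0 ≤ (t : ℂ) * w + ((t ^ 2 * Complex.normSq x : ℝ) : ℂ) * s := by
      intro t
      have h := H ((t : ℂ) * x)
      have e : ((t : ℂ) * x) * c1 + (starRingEnd ℂ) ((t : ℂ) * x) * c2 +
          ((starRingEnd ℂ) ((t : ℂ) * x) * ((t : ℂ) * x)) * s
          = (t : ℂ) * w + ((t ^ 2 * Complex.normSq x : ℝ) : ℂ) * s := by
        simp only [_root_.map_mul, Complex.conj_ofReal, hw]
        push_cast
        linear_combination ((t:ℂ)^2 * s) * hb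
      rwa [e] at h
    have hre : ∀ t : ℝ, 0 ≤ t * w.re + t ^ 2 * Complex.normSq x * s.re := by
      intro t
      have := (Complex.le_def.mp (hH t)).1
      simpa [Complex.add_re, Complex.mul_re, Complex.ofReal_re, Complex.ofReal_im, hsim,
        ← Complex.ofReal_pow] using this
    have him : w.im = 0 := by
      have := (Complex.le_def.mp (hH 1)).2
      simp [Complex.add_im, Complex.mul_im, Complex.ofReal_re, Complex.ofReal_im, hsim] at this
      linarith [this]
    have hwre : w.re = 0 := by
      set n := Complex.normSq x with hn
      have hn0 : 0 ≤ n := Complex.normSq_nonneg x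
      by_contra hne
      have h1 := hre (-w.re / (n * s.re + 1))
      have hden : 0 < n * s.re + 1 := by positivity
      have heq : -w.re / (n * s.re + 1) * w.re + (-w.re / (n * s.re + 1)) ^ 2 * n * s.re
          = -(w.re ^ 2) / (n * s.re + 1) ^ 2 := by
        field_simp
        ring
      rw [heq] at h1
      have h2 : 0 < w.re ^ 2 := by
        rcases lt_or_gt_of_ne hne with hlt | hgt
        · nlinarith
        · nlinarith
      have h3 : -(w.re ^ 2) / (n * s.re + 1) ^ 2 < 0 :=
        div_neg_of_neg_of_pos (by linarith) (by positivity)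
      linarith
    exact Complex.ext hwre him
  have k1 := key 1
  have k2 := key Complex.I
  have cone : (starRingEnd ℂ) (1 : ℂ) = 1 := by simp
  rw [cone] at k1
  simp only [one_mul] at k1
  rw [Complex.conj_I] at k2
  have h2I : (2 * Complex.I) ≠ 0 := by simp [Complex.I_ne_zero]
  have hc1 : c1 = 0 := by
    have h3 : (2 * Complex.I) * c1 = 0 := by linear_combination Complex.I * k1 + k2
    exact (mul_eq_zero.mp h3).resolve_left h2I
  refine ⟨hc1, by linear_combination k1 - hc1⟩

lemma aux_quadform_zero {k : ℕ} (K : Matrix (Fin k) (Fin k) ℂ)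
    (h : ∀ y : Fin k → ℂ, star y ⬝ᵥ K *ᵥ y = 0) : K = 0 := by
  have expand : ∀ (i j : Fin k) (a b : ℂ),
      (starRingEnd ℂ) a * (K i i * a) + (starRingEnd ℂ) a * (K i j * b)
          + ((starRingEnd ℂ) b * (K j i * a) + (starRingEnd ℂ) b * (K j j * b)) = 0 := by
    intro i j a b
    have := h (Pi.single i a + Pi.single j b)
    rw [star_add, ← Pi.single_star, ← Pi.single_star, Matrix.mulVec_add,
      dotProduct_add, add_dotProduct, add_dotProduct] at this
    simp only [Matrix.mulVec_single, single_dotProduct, Pi.add_apply, Complex.star_def,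
      Pi.smul_apply, op_smul_eq_mul, Matrix.col_apply] at this
    linear_combination this
  ext i j
  have hii : K i i = 0 := by
    have := expand i i 1 0
    simpa using this
  have hjj : K j j = 0 := by
    have := expand j j 1 0
    simpa using this
  have cone : (starRingEnd ℂ) (1 : ℂ) = 1 := by simp
  have h1 := expand i j 1 1
  have h2 := expand i j 1 Complex.I
  simp only [hii, hjj, cone, Complex.conj_I, mul_zero, zero_mul, mul_one, one_mul,
    zero_add, add_zero] at h1 h2
  simp only [Matrix.zero_apply]
  have h3 : (2 * Complex.I) * K i j = 0 := by linear_combination Complex.I * h1 + h2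
  have h2I : (2 * Complex.I) ≠ 0 := by simp [Complex.I_ne_zero]
  exact (mul_eq_zero.mp h3).resolve_left h2I

lemma aux_trace_zero {k : ℕ} (M : Matrix (Fin k) (Fin k) ℂ)
    (h : ∀ W : Matrix (Fin k) (Fin k) ℂ, (M * Wᴴ).trace = 0) : M = 0 := by
  have hM := h M
  have e : (M * Mᴴ).trace = ((∑ i, ∑ j, Complex.normSq (M i j) : ℝ) : ℂ) := by
    push_cast
    simp only [Matrix.trace, Matrix.diag, Matrix.mul_apply, Matrix.conjTranspose_apply,
      Complex.star_def, Complex.mul_conj]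
  rw [e] at hM
  have hsum : (∑ i, ∑ j, Complex.normSq (M i j) : ℝ) = 0 := by exact_mod_cast hM
  ext i j
  have hnn : ∀ i ∈ Finset.univ, (0:ℝ) ≤ ∑ j, Complex.normSq (M i j) :=
    fun i _ => Finset.sum_nonneg fun j _ => Complex.normSq_nonneg _
  have hrow := (Finset.sum_eq_zero_iff_of_nonneg hnn).mp hsum i (Finset.mem_univ i)
  have := (Finset.sum_eq_zero_iff_of_nonneg
    (fun j _ => Complex.normSq_nonneg (M i j))).mp hrow j (Finset.mem_univ j)
  simpa [Complex.normSq_eq_zero] using this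

/-- Lemma 2, item a): if `T` is a positive map, `V₁, V` orthogonal projections with
`Im V₁ ⊆ Im V`, the corners of `V` and of `V₁` are `T`-invariant, then
`V T^*((V − V₁) M (V − V₁)) V ⊆ (V − V₁) M (V − V₁)`. -/
theorem stmt16 {k : ℕ}
    (T Tstar : Matrix (Fin k) (Fin k) ℂ → Matrix (Fin k) (Fin k) ℂ)
    (hlin : IsLinearMap ℂ T) (hpos : IsPosMap T)
    (hadj : ∀ X Y : Matrix (Fin k) (Fin k) ℂ,
      (T X * Yᴴ).trace = (X * (Tstar Y)ᴴ).trace)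
    (V1 V : Matrix (Fin k) (Fin k) ℂ)
    (hV1 : IsOrthProj V1) (hV : IsOrthProj V)
    (hsub : LinearMap.range V1.mulVecLin ≤ LinearMap.range V.mulVecLin)
    (hinv : LeavesInv T V) (hinv1 : LeavesInv T V1) :
    ∀ X : Matrix (Fin k) (Fin k) ℂ, ∃ Y : Matrix (Fin k) (Fin k) ℂ,
      V * Tstar ((V - V1) * X * (V - V1)) * V = (V - V1) * Y * (V - V1) := by
  -- basic projection algebra
  have hVV1 : V * V1 = V1 := by
    have hv : ∀ x : Fin k → ℂ, V *ᵥ (V1 *ᵥ x) = V1 *ᵥ x := by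
      intro x
      obtain ⟨y, hy⟩ := hsub ⟨x, rfl⟩
      simp only [Matrix.mulVecLin_apply] at hy
      rw [← hy, Matrix.mulVec_mulVec, hV.2]
    ext i j
    have := congrFun (hv (Pi.single j 1)) i
    rw [Matrix.mulVec_mulVec] at this
    simpa [Matrix.mulVec_mulVec] using this
  have hV1V : V1 * V = V1 := by
    have h1 : (V * V1)ᴴ = V1ᴴ * Vᴴ := Matrix.conjTranspose_mul _ _
    rw [hVV1, hV1.1.eq, hV.1.eq] at h1
    exact h1.symm
  set P : Matrix (Fin k) (Fin k) ℂ := V - V1 with hP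
  have Pherm : Pᴴ = P := by
    simp [hP, Matrix.conjTranspose_sub, hV.1.eq, hV1.1.eq]
  have hPV1 : P * V1 = 0 := by
    simp [hP, Matrix.sub_mul, hVV1, hV1.2]
  have hV1P : V1 * P = 0 := by
    simp [hP, Matrix.mul_sub, hV1V, hV1.2]
  have hPP : P * P = P := by
    simp only [hP, Matrix.sub_mul, Matrix.mul_sub, hV.2, hV1.2, hVV1, hV1V]
    abel
  have Ppsd : P.PosSemidef := by
    have := Matrix.posSemidef_conjTranspose_mul_self P
    rwa [Pherm, hPP] at this
  -- the key positivity lemma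
  have hK : ∀ A : Matrix (Fin k) (Fin k) ℂ,
      P * T (V1 * A * P) * P = 0 ∧ P * T (P * Aᴴ * V1) * P = 0 := by
    intro A
    set K1 := P * T (V1 * A * P) * P with hK1
    set K2 := P * T (P * Aᴴ * V1) * P with hK2
    set S := P * T P * P with hS
    have hSpsd : S.PosSemidef := by
      have h1 := (hpos P Ppsd).mul_mul_conjTranspose_same P
      rwa [Pherm] at h1
    have hquad : ∀ (y : Fin k → ℂ) (x : ℂ),
        0 ≤ x * (star y ⬝ᵥ K1 *ᵥ y) + (starRingEnd ℂ) x * (star y ⬝ᵥ K2 *ᵥ y)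
          + ((starRingEnd ℂ) x * x) * (star y ⬝ᵥ S *ᵥ y) := by
      intro y x
      set R := Aᴴ * V1 + x • P with hR
      have hNpsd : (Rᴴ * R).PosSemidef := Matrix.posSemidef_conjTranspose_mul_self R
      have hNexp : Rᴴ * R = V1 * (A * Aᴴ) * V1 + x • (V1 * A * P)
          + (starRingEnd ℂ) x • (P * Aᴴ * V1) + ((starRingEnd ℂ) x * x) • P := by
        rw [hR, Matrix.conjTranspose_add, Matrix.conjTranspose_mul,
          Matrix.conjTranspose_smul, Matrix.conjTranspose_conjTranspose, hV1.1.eq, Pherm]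
        simp only [Matrix.add_mul, Matrix.mul_add, Matrix.smul_mul, Matrix.mul_smul,
          smul_add, smul_smul, Matrix.mul_assoc, hPP, starRingEnd_apply, mul_comm]
        abel
      have hTN : T (Rᴴ * R) = T (V1 * (A * Aᴴ) * V1) + x • T (V1 * A * P)
          + (starRingEnd ℂ) x • T (P * Aᴴ * V1) + ((starRingEnd ℂ) x * x) • T P := by
        rw [hNexp, hlin.map_add, hlin.map_add, hlin.map_add,
          hlin.map_smul, hlin.map_smul, hlin.map_smul]
      have hcomp := (hpos _ hNpsd).mul_mul_conjTranspose_same P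
      rw [Pherm, hTN] at hcomp
      have h0 : P * T (V1 * (A * Aᴴ) * V1) * P = 0 := by
        conv_lhs => rw [hinv1 (A * Aᴴ)]
        rw [show P * (V1 * T (V1 * (A * Aᴴ) * V1) * V1) * P
            = (P * V1) * T (V1 * (A * Aᴴ) * V1) * (V1 * P) by
          simp only [Matrix.mul_assoc]]
        rw [hPV1, hV1P]
        simp
      have hexp2 : P * (T (V1 * (A * Aᴴ) * V1) + x • T (V1 * A * P)
          + (starRingEnd ℂ) x • T (P * Aᴴ * V1) + ((starRingEnd ℂ) x * x) • T P) * P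
          = x • K1 + (starRingEnd ℂ) x • K2 + ((starRingEnd ℂ) x * x) • S := by
        simp only [Matrix.mul_add, Matrix.add_mul, Matrix.mul_smul, Matrix.smul_mul, hK1, hK2, hS]
        rw [h0]
        abel
      rw [hexp2] at hcomp
      have := hcomp.dotProduct_mulVec_nonneg y
      simpa [Matrix.add_mulVec, Matrix.smul_mulVec, dotProduct_add,
        dotProduct_smul, smul_eq_mul] using this
    constructor
    · apply aux_quadform_zero
      intro y
      exact ((aux_cscalar _ _ _ (hSpsd.dotProduct_mulVec_nonneg y) (hquad y)).1)
    · apply aux_quadform_zero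
      intro y
      exact ((aux_cscalar _ _ _ (hSpsd.dotProduct_mulVec_nonneg y) (hquad y)).2)
  -- trace identity for the adjoint
  have hadj' : ∀ Y D : Matrix (Fin k) (Fin k) ℂ,
      (Tstar Y * D).trace = starRingEnd ℂ ((T Dᴴ * Yᴴ).trace) := by
    intro Y D
    have h1 := hadj Dᴴ Y
    rw [show Dᴴ * (Tstar Y)ᴴ = (Tstar Y * D)ᴴ from (Matrix.conjTranspose_mul _ _).symm,
      Matrix.trace_conjTranspose] at h1
    rw [h1, starRingEnd_apply, star_star]
  intro X
  set Z := Tstar (P * X * P) with hZ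
  -- M1 = V1 * Z * V = 0
  have hM1 : V1 * Z * V = 0 := by
    apply aux_trace_zero
    intro W
    have e1 : (V1 * Z * V * Wᴴ).trace = (Z * (V * Wᴴ * V1)).trace := by
      rw [show V1 * Z * V * Wᴴ = V1 * (Z * (V * Wᴴ)) by simp only [Matrix.mul_assoc],
        Matrix.trace_mul_comm, show Z * (V * Wᴴ) * V1 = Z * (V * Wᴴ * V1) by
          simp only [Matrix.mul_assoc]]
    rw [e1, hadj' (P * X * P) (V * Wᴴ * V1)]
    have e2 : (V * Wᴴ * V1)ᴴ = V1 * W * V := by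
      simp [Matrix.conjTranspose_mul, hV.1.eq, hV1.1.eq, Matrix.mul_assoc]
    rw [e2]
    have e3 : V1 * W * V = V1 * W * V1 + V1 * W * P := by
      rw [hP]
      simp [Matrix.mul_sub]
    have e4 : (P * X * P)ᴴ = P * Xᴴ * P := by
      simp [Matrix.conjTranspose_mul, Pherm, Matrix.mul_assoc]
    rw [e3, e4, hlin.map_add, Matrix.add_mul, Matrix.trace_add]
    have t1 : (T (V1 * W * V1) * (P * Xᴴ * P)).trace = 0 := by
      rw [hinv1 W]
      rw [show V1 * T (V1 * W * V1) * V1 * (P * Xᴴ * P)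
          = V1 * T (V1 * W * V1) * (V1 * P) * (Xᴴ * P) by simp only [Matrix.mul_assoc],
        hV1P]
      simp
    have t2 : (T (V1 * W * P) * (P * Xᴴ * P)).trace = 0 := by
      have e5 : (T (V1 * W * P) * (P * Xᴴ * P)).trace
          = ((P * T (V1 * W * P) * P) * Xᴴ).trace := by
        rw [show T (V1 * W * P) * (P * Xᴴ * P) = (T (V1 * W * P) * P * Xᴴ) * P by
          simp only [Matrix.mul_assoc], Matrix.trace_mul_comm,
          show P * (T (V1 * W * P) * P * Xᴴ) = (P * T (V1 * W * P) * P) * Xᴴ by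
            simp only [Matrix.mul_assoc]]
      rw [e5, (hK W).1]
      simp
    rw [t1, t2]
    simp
  -- M2 = V * Z * V1 = 0
  have hM2 : V * Z * V1 = 0 := by
    apply aux_trace_zero
    intro W
    have e1 : (V * Z * V1 * Wᴴ).trace = (Z * (V1 * Wᴴ * V)).trace := by
      rw [show V * Z * V1 * Wᴴ = V * (Z * (V1 * Wᴴ)) by simp only [Matrix.mul_assoc],
        Matrix.trace_mul_comm, show Z * (V1 * Wᴴ) * V = Z * (V1 * Wᴴ * V) by
          simp only [Matrix.mul_assoc]]
    rw [e1, hadj' (P * X * P) (V1 * Wᴴ * V)]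
    have e2 : (V1 * Wᴴ * V)ᴴ = V * W * V1 := by
      simp [Matrix.conjTranspose_mul, hV.1.eq, hV1.1.eq, Matrix.mul_assoc]
    rw [e2]
    have e3 : V * W * V1 = V1 * (W * V1) + P * W * V1 := by
      rw [hP]
      simp only [Matrix.sub_mul, Matrix.mul_assoc]
      abel
    have e4 : (P * X * P)ᴴ = P * Xᴴ * P := by
      simp [Matrix.conjTranspose_mul, Pherm, Matrix.mul_assoc]
    rw [e3, e4, hlin.map_add, Matrix.add_mul, Matrix.trace_add]
    have t1 : (T (V1 * (W * V1)) * (P * Xᴴ * P)).trace = 0 := by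
      have e6 : V1 * (W * V1) = V1 * (W * V1) * V1 := by
        simp only [Matrix.mul_assoc, hV1.2]
      rw [e6, hinv1 (W * V1)]
      rw [show V1 * T (V1 * (W * V1) * V1) * V1 * (P * Xᴴ * P)
          = V1 * T (V1 * (W * V1) * V1) * (V1 * P) * (Xᴴ * P) by simp only [Matrix.mul_assoc],
        hV1P]
      simp
    have t2 : (T (P * W * V1) * (P * Xᴴ * P)).trace = 0 := by
      have e5 : (T (P * W * V1) * (P * Xᴴ * P)).trace
          = ((P * T (P * W * V1) * P) * Xᴴ).trace := by
        rw [show T (P * W * V1) * (P * Xᴴ * P) = (T (P * W * V1) * P * Xᴴ) * P by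
          simp only [Matrix.mul_assoc], Matrix.trace_mul_comm,
          show P * (T (P * W * V1) * P * Xᴴ) = (P * T (P * W * V1) * P) * Xᴴ by
            simp only [Matrix.mul_assoc]]
      have := (hK Wᴴ).2
      rw [Matrix.conjTranspose_conjTranspose] at this
      rw [e5, this]
      simp
    rw [t1, t2]
    simp
  -- conclude
  refine ⟨Z, ?_⟩
  have hM3 : V1 * Z * V1 = 0 := by
    have : V1 * Z * V1 = (V1 * Z * V) * V1 := by
      rw [show (V1 * Z * V) * V1 = V1 * Z * (V * V1) by simp only [Matrix.mul_assoc], hVV1]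
    rw [this, hM1]
    simp
  have hexp : P * Z * P = V * Z * V - V1 * Z * V - V * Z * V1 + V1 * Z * V1 := by
    rw [hP]
    simp only [Matrix.sub_mul, Matrix.mul_sub]
    abel
  rw [hexp, hM1, hM2, hM3]
  simp

end
end

section
/- Let T : M_k(ℂ) → M_k(ℂ) be a positive map and V ∈ M_k(ℂ) an orthogonal projection with T(VM_kV) ⊆ VM_kV. Then T|_{VM_kV} : VM_kV → VM_kV is irreducible if and only if the map X ↦ V T*(X) V, regarded as a map VM_kV → VM_kV, is irreducible. -/
open scoped Kronecker ComplexOrder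
open Matrix

noncomputable section

section AuxStmt17

variable {n : Type*} [Fintype n] [DecidableEq n]

private lemma aux_psd_eq_conjTranspose_mul_self {P : Matrix n n ℂ} (hP : P.PosSemidef) :
    ∃ B : Matrix n n ℂ, P = Bᴴ * B := by
  open scoped MatrixOrder in
  exact CStarAlgebra.nonneg_iff_eq_star_mul_self.mp hP.nonneg

private lemma aux_psd_diag_nonneg {P : Matrix n n ℂ} (hP : P.PosSemidef) (i : n) :
    0 ≤ P i i := by
  have h := hP.dotProduct_mulVec_nonneg (Pi.single i 1)
  simpa [dotProduct, Matrix.mulVec, Pi.single_apply, mul_comm] using h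

private lemma aux_psd_trace_nonneg {P : Matrix n n ℂ} (hP : P.PosSemidef) :
    0 ≤ P.trace := by
  rw [Matrix.trace]
  exact Finset.sum_nonneg fun i _ => aux_psd_diag_nonneg hP i

private lemma aux_psd_trace_eq_zero {P : Matrix n n ℂ} (hP : P.PosSemidef)
    (h : P.trace = 0) : P = 0 := by
  obtain ⟨B, rfl⟩ := aux_psd_eq_conjTranspose_mul_self hP
  suffices hB : B = 0 by simp [hB]
  have hdiag : ∀ i, (Bᴴ * B) i i = 0 := by
    intro i
    refine (Finset.sum_eq_zero_iff_of_nonneg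
      (fun j _ => aux_psd_diag_nonneg (Matrix.posSemidef_conjTranspose_mul_self B) j)).mp
      h i (Finset.mem_univ i)
  ext j i
  have hi := hdiag i
  have h2 : dotProduct (star fun k => B k i) (fun k => B k i) = 0 := by
    rw [← hi, Matrix.mul_apply]
    simp [dotProduct, Matrix.conjTranspose_apply]
  have h3 := dotProduct_star_self_eq_zero.mp h2
  exact congrFun h3 j

private lemma aux_trace_mul_psd_nonneg {A B : Matrix n n ℂ}
    (hA : A.PosSemidef) (hB : B.PosSemidef) : 0 ≤ (A * B).trace := by
  obtain ⟨C, rfl⟩ := aux_psd_eq_conjTranspose_mul_self hB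
  have h1 : (A * (Cᴴ * C)).trace = (C * A * Cᴴ).trace := by
    rw [← Matrix.mul_assoc, Matrix.trace_mul_cycle]
  rw [h1]
  exact aux_psd_trace_nonneg (hA.mul_mul_conjTranspose_same C)

private lemma aux_eq_of_traces {C D : Matrix n n ℂ}
    (h : ∀ X : Matrix n n ℂ, (X * Cᴴ).trace = (X * Dᴴ).trace) : C = D := by
  have h0 : ∀ X : Matrix n n ℂ, (X * (C - D)ᴴ).trace = 0 := by
    intro X
    rw [Matrix.conjTranspose_sub, Matrix.mul_sub, Matrix.trace_sub, h, sub_self]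
  have h1 := h0 (C - D)
  rw [Matrix.trace_mul_comm] at h1
  have h2 := aux_psd_trace_eq_zero (Matrix.posSemidef_conjTranspose_mul_self _) h1
  have h3 := Matrix.conjTranspose_mul_self_eq_zero.mp h2
  exact sub_eq_zero.mp h3

private lemma aux_psd_mul_proj {Q A : Matrix n n ℂ} (hA : A.PosSemidef)
    (hQH : Qᴴ = Q) (hQI : Q * Q = Q) (h : (Q * A).trace = 0) :
    A * Q = 0 ∧ Q * A = 0 := by
  obtain ⟨C, rfl⟩ := aux_psd_eq_conjTranspose_mul_self hA
  have h1 : ((C * Q)ᴴ * (C * Q)).trace = 0 := by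
    have e : (C * Q)ᴴ * (C * Q) = Q * (Cᴴ * C) * Q := by
      rw [Matrix.conjTranspose_mul, hQH]
      noncomm_ring
    rw [e, Matrix.trace_mul_cycle, ← Matrix.mul_assoc, hQI, Matrix.mul_assoc]
    exact h
  have hCQ : C * Q = 0 := Matrix.conjTranspose_mul_self_eq_zero.mp
      (aux_psd_trace_eq_zero (Matrix.posSemidef_conjTranspose_mul_self _) h1)
  constructor
  · rw [Matrix.mul_assoc, hCQ, Matrix.mul_zero]
  · have e2 : Q * (Cᴴ * C) = (Cᴴ * C * Q)ᴴ := by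
      rw [Matrix.conjTranspose_mul, hQH, Matrix.conjTranspose_mul,
        Matrix.conjTranspose_conjTranspose]
    rw [e2, Matrix.mul_assoc, hCQ, Matrix.mul_zero, Matrix.conjTranspose_zero]

private lemma aux_ext_psd {f : Matrix n n ℂ → Matrix n n ℂ}
    (hadd : ∀ A B, f (A + B) = f A + f B)
    (hsmul : ∀ (c : ℂ) A, f (c • A) = c • f A)
    (hpsd : ∀ P : Matrix n n ℂ, P.PosSemidef → f P = 0)
    (X : Matrix n n ℂ) : f X = 0 := by
  have hc : ∀ c : ℂ, f (Xᴴ * X) + c • f Xᴴ + (starRingEnd ℂ c) • f X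
      + ((starRingEnd ℂ c) * c) • f 1 = 0 := by
    intro c
    have e : (X + c • 1 : Matrix n n ℂ)ᴴ * (X + c • 1)
        = Xᴴ * X + c • Xᴴ + (starRingEnd ℂ c) • X
          + ((starRingEnd ℂ c) * c) • (1 : Matrix n n ℂ) := by
      rw [Matrix.conjTranspose_add, Matrix.conjTranspose_smul, Matrix.conjTranspose_one]
      rw [Matrix.add_mul, Matrix.mul_add, Matrix.mul_add, mul_smul_comm, smul_mul_assoc,
        smul_mul_assoc, Matrix.mul_one, Matrix.one_mul, mul_smul_comm, smul_smul]
      rw [Complex.star_def]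
      simp only [Matrix.mul_one, Matrix.one_mul]
      abel
    have h0 := hpsd _ (Matrix.posSemidef_conjTranspose_mul_self (X + c • 1))
    rw [e, hadd, hadd, hadd, hsmul, hsmul, hsmul] at h0
    exact h0
  have e1 : starRingEnd ℂ 1 = 1 := by simp
  have e2 : starRingEnd ℂ (-1) = -1 := by simp
  have e3 : starRingEnd ℂ Complex.I = -Complex.I := Complex.conj_I
  have e4 : starRingEnd ℂ (-Complex.I) = Complex.I := by simp
  have h1 := hc 1; rw [e1] at h1
  have h2 := hc (-1); rw [e2] at h2
  have h3 := hc Complex.I; rw [e3] at h3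
  have h4 := hc (-Complex.I); rw [e4] at h4
  have k1 : ((2 : ℂ) * Complex.I) • (f Xᴴ - f X) = 0 := by
    have comb : ((2 : ℂ) * Complex.I) • (f Xᴴ - f X)
        = (f (Xᴴ * X) + Complex.I • f Xᴴ + (-Complex.I) • f X
            + (-Complex.I * Complex.I) • f 1)
          - (f (Xᴴ * X) + (-Complex.I) • f Xᴴ + Complex.I • f X
            + (Complex.I * -Complex.I) • f 1) := by
      module
    rw [comb, h3, h4, sub_zero]
  have k2 : (2 : ℂ) • (f Xᴴ + f X) = 0 := by
    have comb : (2 : ℂ) • (f Xᴴ + f X)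
        = (f (Xᴴ * X) + (1 : ℂ) • f Xᴴ + (1 : ℂ) • f X + ((1 : ℂ) * 1) • f 1)
          - (f (Xᴴ * X) + (-1 : ℂ) • f Xᴴ + (-1 : ℂ) • f X + ((-1 : ℂ) * -1) • f 1) := by
      module
    rw [comb, h1, h2, sub_zero]
  have hbc : f Xᴴ = f X := by
    have h2I : ((2 : ℂ) * Complex.I) ≠ 0 := by simp [Complex.I_ne_zero]
    exact sub_eq_zero.mp ((smul_eq_zero.mp k1).resolve_left h2I)
  have k3 : (4 : ℂ) • f X = 0 := by
    have comb : (4 : ℂ) • f X = (2 : ℂ) • (f X + f X) := by module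
    rw [hbc] at k2
    rw [comb]; exact k2
  have h4ne : (4 : ℂ) ≠ 0 := by norm_num
  exact (smul_eq_zero.mp k3).resolve_left h4ne

private lemma aux_quadform_trace (M : Matrix n n ℂ) (x : n → ℂ) :
    dotProduct (star x) (M *ᵥ x) = (M * Matrix.vecMulVec x (star x)).trace := by
  simp only [dotProduct, Matrix.mulVec, Matrix.trace, Matrix.diag_apply, Matrix.mul_apply,
    Matrix.vecMulVec_apply, Pi.star_apply, Finset.mul_sum]
  refine Finset.sum_congr rfl fun i _ => Finset.sum_congr rfl fun j _ => by ring

private lemma aux_vecMulVec_psd (x : n → ℂ) : (Matrix.vecMulVec x (star x)).PosSemidef := by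
  have e : Matrix.vecMulVec x (star x)
      = (Matrix.replicateRow Unit (star x))ᴴ * Matrix.replicateRow Unit (star x) := by
    rw [Matrix.conjTranspose_replicateRow, star_star, Matrix.vecMulVec_eq Unit]
  rw [e]
  exact Matrix.posSemidef_conjTranspose_mul_self _

end AuxStmt17

private lemma aux_proj_absorb {n : Type*} [Fintype n] [DecidableEq n]
    {P Q : Matrix n n ℂ} (hP : IsOrthProj P) (hQ : IsOrthProj Q)
    (hle : LinearMap.range Q.mulVecLin ≤ LinearMap.range P.mulVecLin) :
    P * Q = Q ∧ Q * P = Q := by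
  have h1 : ∀ x, P *ᵥ (Q *ᵥ x) = Q *ᵥ x := by
    intro x
    obtain ⟨y, hy⟩ := hle (LinearMap.mem_range_self Q.mulVecLin x)
    simp only [Matrix.mulVecLin_apply] at hy
    calc P *ᵥ (Q *ᵥ x) = P *ᵥ (P *ᵥ y) := by rw [hy]
      _ = (P * P) *ᵥ y := Matrix.mulVec_mulVec y P P
      _ = P *ᵥ y := by rw [hP.2]
      _ = Q *ᵥ x := hy
  have hPQ : P * Q = Q := by
    have h2 : Matrix.toLin' (P * Q) = Matrix.toLin' Q := by
      refine LinearMap.ext fun x => ?_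
      rw [Matrix.toLin'_apply, Matrix.toLin'_apply, ← Matrix.mulVec_mulVec]
      exact h1 x
    exact Matrix.toLin'.injective h2
  refine ⟨hPQ, ?_⟩
  have e : Q * P = (P * Q)ᴴ := by
    rw [Matrix.conjTranspose_mul, hP.1.eq, hQ.1.eq]
  rw [e, hPQ, hQ.1.eq]

/-- Lemma 2, item b): `T` restricted to the corner of `V` is irreducible iff the
map `X ↦ V T^*(X) V` restricted to the corner of `V` is irreducible. -/
theorem stmt17 {k : ℕ}
    (T Tstar : Matrix (Fin k) (Fin k) ℂ → Matrix (Fin k) (Fin k) ℂ)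
    (hlin : IsLinearMap ℂ T) (hpos : IsPosMap T)
    (hadj : ∀ X Y : Matrix (Fin k) (Fin k) ℂ,
      (T X * Yᴴ).trace = (X * (Tstar Y)ᴴ).trace)
    (V : Matrix (Fin k) (Fin k) ℂ) (hV : IsOrthProj V)
    (hinv : LeavesInv T V) :
    IsIrredOn T V ↔ IsIrredOn (fun X => V * Tstar X * V) V := by
  obtain ⟨hVH, hVI⟩ := hV
  have hVHe : Vᴴ = V := hVH
  -- `T` is a real map: it commutes with conjugate transposition.
  have Treal : ∀ X, T Xᴴ = (T X)ᴴ := by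
    intro X
    have hz := aux_ext_psd (f := fun Y => (T Yᴴ)ᴴ - T Y)
      (fun A B => by simp only [Matrix.conjTranspose_add, hlin.map_add]; abel)
      (fun c A => by
        simp only [Matrix.conjTranspose_smul, hlin.map_smul, star_star, smul_sub])
      (fun P hP => by
        show (T Pᴴ)ᴴ - T P = 0
        rw [hP.1.eq, (hpos P hP).1.eq, sub_self]) X
    have h9 : (T Xᴴ)ᴴ = T X := sub_eq_zero.mp hz
    rw [← h9, Matrix.conjTranspose_conjTranspose]
  -- `Tstar` is additive.
  have TstarAdd : ∀ A B, Tstar (A + B) = Tstar A + Tstar B := by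
    intro A B
    refine aux_eq_of_traces fun X => ?_
    calc (X * (Tstar (A + B))ᴴ).trace = (T X * (A + B)ᴴ).trace := (hadj X (A + B)).symm
      _ = (T X * Aᴴ).trace + (T X * Bᴴ).trace := by
          rw [Matrix.conjTranspose_add, Matrix.mul_add, Matrix.trace_add]
      _ = (X * (Tstar A)ᴴ).trace + (X * (Tstar B)ᴴ).trace := by rw [hadj, hadj]
      _ = (X * (Tstar A + Tstar B)ᴴ).trace := by
          rw [Matrix.conjTranspose_add, Matrix.mul_add, Matrix.trace_add]
  -- `Tstar` is homogeneous.
  have TstarSmul : ∀ (c : ℂ) A, Tstar (c • A) = c • Tstar A := by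
    intro c A
    refine aux_eq_of_traces fun X => ?_
    calc (X * (Tstar (c • A))ᴴ).trace = (T X * (c • A)ᴴ).trace := (hadj X _).symm
      _ = star c * (T X * Aᴴ).trace := by
          rw [Matrix.conjTranspose_smul, mul_smul_comm, Matrix.trace_smul, smul_eq_mul]
      _ = star c * (X * (Tstar A)ᴴ).trace := by rw [hadj]
      _ = (X * (c • Tstar A)ᴴ).trace := by
          rw [Matrix.conjTranspose_smul, mul_smul_comm, Matrix.trace_smul, smul_eq_mul]
  -- `Tstar` maps PSD matrices to hermitian matrices.
  have TstarHerm : ∀ B : Matrix (Fin k) (Fin k) ℂ, B.PosSemidef → (Tstar B)ᴴ = Tstar B := by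
    intro B hB
    refine aux_eq_of_traces fun X => ?_
    rw [Matrix.conjTranspose_conjTranspose]
    calc (X * Tstar B).trace
        = star ((X * Tstar B)ᴴ).trace := by rw [Matrix.trace_conjTranspose, star_star]
      _ = star ((Tstar B)ᴴ * Xᴴ).trace := by rw [Matrix.conjTranspose_mul]
      _ = star (Xᴴ * (Tstar B)ᴴ).trace := by rw [Matrix.trace_mul_comm]
      _ = star (T Xᴴ * Bᴴ).trace := by rw [hadj]
      _ = star ((T X)ᴴ * Bᴴ).trace := by rw [Treal]
      _ = star ((B * T X)ᴴ).trace := by rw [Matrix.conjTranspose_mul]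
      _ = (B * T X).trace := by rw [Matrix.trace_conjTranspose, star_star]
      _ = (T X * B).trace := Matrix.trace_mul_comm _ _
      _ = (T X * Bᴴ).trace := by rw [hB.1.eq]
      _ = (X * (Tstar B)ᴴ).trace := hadj X B
  -- `Tstar` is a positive map.
  have TstarPSD : ∀ B : Matrix (Fin k) (Fin k) ℂ, B.PosSemidef → (Tstar B).PosSemidef := by
    intro B hB
    refine Matrix.PosSemidef.of_dotProduct_mulVec_nonneg (TstarHerm B hB) fun x => ?_
    rw [aux_quadform_trace]
    have hP := aux_vecMulVec_psd x
    calc (0 : ℂ) ≤ (T (Matrix.vecMulVec x (star x)) * B).trace :=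
          aux_trace_mul_psd_nonneg (hpos _ hP) hB
      _ = (T (Matrix.vecMulVec x (star x)) * Bᴴ).trace := by rw [hB.1.eq]
      _ = (Matrix.vecMulVec x (star x) * (Tstar B)ᴴ).trace := hadj _ B
      _ = (Matrix.vecMulVec x (star x) * Tstar B).trace := by rw [TstarHerm B hB]
      _ = (Tstar B * Matrix.vecMulVec x (star x)).trace := Matrix.trace_mul_comm _ _
  -- Transfer 1: a `T`-invariant corner `V' ≤ V` yields an invariant corner `V - V'`
  -- for the map `X ↦ V * Tstar X * V`.
  have transfer1 : ∀ V' : Matrix (Fin k) (Fin k) ℂ, IsOrthProj V' → V * V' = V' →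
      V' * V = V' → LeavesInv T V' → LeavesInv (fun X => V * Tstar X * V) (V - V') := by
    intro V' hV' hVV' hV'V hL
    have hV'He : V'ᴴ = V' := hV'.1
    have hV'I : V' * V' = V' := hV'.2
    set W := V - V' with hWdef
    have hV'W : V' * W = 0 := by rw [hWdef, Matrix.mul_sub, hV'V, hV'I, sub_self]
    have hWV' : W * V' = 0 := by rw [hWdef, Matrix.sub_mul, hVV', hV'I, sub_self]
    have hWH : Wᴴ = W := by rw [hWdef, Matrix.conjTranspose_sub, hVHe, hV'He]
    have hTV' : T V' = V' * T V' * V' := by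
      have h := hL V'
      rwa [hV'I, hV'I] at h
    have key : ∀ P : Matrix (Fin k) (Fin k) ℂ, P.PosSemidef →
        V * Tstar (W * P * W) * V = W * (V * Tstar (W * P * W) * V) * W := by
      intro P hP
      set B := W * P * W with hBdef
      have hBpsd : B.PosSemidef := by
        have h := hP.mul_mul_conjTranspose_same W
        rwa [hWH] at h
      have hSBpsd : (V * Tstar B * V).PosSemidef := by
        have h := (TstarPSD B hBpsd).mul_mul_conjTranspose_same V
        rwa [hVHe] at h
      have hV'B : V' * Bᴴ = 0 := by
        rw [hBdef, Matrix.conjTranspose_mul, Matrix.conjTranspose_mul, hWH,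
          ← Matrix.mul_assoc, hV'W, Matrix.zero_mul]
      have e0 : V' * (V * Tstar B * V) = V' * Tstar B * V := by
        rw [← Matrix.mul_assoc, ← Matrix.mul_assoc, hV'V]
      have htr : (V' * (V * Tstar B * V)).trace = 0 := by
        rw [e0, Matrix.trace_mul_cycle, hVV']
        calc (V' * Tstar B).trace = (V' * (Tstar B)ᴴ).trace := by rw [TstarHerm B hBpsd]
          _ = (T V' * Bᴴ).trace := (hadj V' B).symm
          _ = 0 := by
              rw [hTV', Matrix.mul_assoc, hV'B, Matrix.mul_zero, Matrix.trace_zero]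
      obtain ⟨hSV', hV'S⟩ := aux_psd_mul_proj hSBpsd hV'He hV'I htr
      have hSV : V * (V * Tstar B * V) = V * Tstar B * V := by
        rw [← Matrix.mul_assoc, ← Matrix.mul_assoc, hVI]
      have hVS : (V * Tstar B * V) * V = V * Tstar B * V := by
        rw [Matrix.mul_assoc, hVI]
      have hVeq : V = V' + W := by rw [hWdef]; abel
      have h5 : W * (V * Tstar B * V) = V * Tstar B * V := by
        have h : (V' + W) * (V * Tstar B * V) = V * Tstar B * V := by rw [← hVeq, hSV]
        rwa [Matrix.add_mul, hV'S, zero_add] at h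
      have h6 : (V * Tstar B * V) * W = V * Tstar B * V := by
        have h : (V * Tstar B * V) * (V' + W) = V * Tstar B * V := by rw [← hVeq, hVS]
        rwa [Matrix.mul_add, hSV', zero_add] at h
      calc V * Tstar B * V = (V * Tstar B * V) * W := h6.symm
        _ = W * (V * Tstar B * V) * W := by rw [h5]
    intro X
    show V * Tstar (W * X * W) * V = W * (V * Tstar (W * X * W) * V) * W
    have hz := aux_ext_psd
      (f := fun Y => V * Tstar (W * Y * W) * V - W * (V * Tstar (W * Y * W) * V) * W)
      (fun A B => by
        simp only [Matrix.mul_add, Matrix.add_mul, TstarAdd]; abel)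
      (fun c A => by
        simp only [mul_smul_comm, smul_mul_assoc, TstarSmul, smul_sub])
      (fun P hP => sub_eq_zero.mpr (key P hP)) X
    exact sub_eq_zero.mp hz
  -- Transfer 2: an invariant corner `W ≤ V` for `X ↦ V * Tstar X * V` yields a
  -- `T`-invariant corner `V - W`.
  have transfer2 : ∀ W : Matrix (Fin k) (Fin k) ℂ, IsOrthProj W → V * W = W →
      W * V = W → LeavesInv (fun X => V * Tstar X * V) W → LeavesInv T (V - W) := by
    intro W hW hVW hWV hL
    have hWH : Wᴴ = W := hW.1
    have hWI : W * W = W := hW.2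
    set V' := V - W with hV'def
    have hWV' : W * V' = 0 := by rw [hV'def, Matrix.mul_sub, hWV, hWI, sub_self]
    have hV'W : V' * W = 0 := by rw [hV'def, Matrix.sub_mul, hVW, hWI, sub_self]
    have hV'H : V'ᴴ = V' := by rw [hV'def, Matrix.conjTranspose_sub, hVHe, hWH]
    have hVV' : V * V' = V' := by rw [hV'def, Matrix.mul_sub, hVI, hVW]
    have hV'V : V' * V = V' := by rw [hV'def, Matrix.sub_mul, hVI, hWV]
    have hSW : V * Tstar W * V = W * (V * Tstar W * V) * W := by
      have h := hL W
      simp only at h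
      rwa [hWI, hWI] at h
    have key : ∀ P : Matrix (Fin k) (Fin k) ℂ, P.PosSemidef →
        T (V' * P * V') = V' * T (V' * P * V') * V' := by
      intro P hP
      have hBpsd : (V' * P * V').PosSemidef := by
        have h := hP.mul_mul_conjTranspose_same V'
        rwa [hV'H] at h
      have hTBpsd := hpos _ hBpsd
      have e1 : V * (V' * P * V') = V' * P * V' := by
        rw [← Matrix.mul_assoc, ← Matrix.mul_assoc, hVV']
      have e2 : (V' * P * V') * V = V' * P * V' := by
        rw [Matrix.mul_assoc, hV'V]
      have hVBV : V * (V' * P * V') * V = V' * P * V' := by rw [e1, e2]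
      have hTB_V : T (V' * P * V') = V * T (V' * P * V') * V := by
        have h := hinv (V' * P * V')
        rwa [hVBV] at h
      have hBW : (V' * P * V') * W = 0 := by
        rw [Matrix.mul_assoc, hV'W, Matrix.mul_zero]
      have e4 : (V * Tstar W * V)ᴴ = V * (Tstar W)ᴴ * V := by
        rw [Matrix.conjTranspose_mul, Matrix.conjTranspose_mul, hVHe, ← Matrix.mul_assoc]
      have e6 : (V * Tstar W * V)ᴴ = W * (V * Tstar W * V)ᴴ * W := by
        conv_lhs => rw [hSW]
        rw [Matrix.conjTranspose_mul, Matrix.conjTranspose_mul, hWH, ← Matrix.mul_assoc]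
      have e7 : (V' * P * V') * (V * (Tstar W)ᴴ * V) = ((V' * P * V') * (Tstar W)ᴴ) * V := by
        rw [← Matrix.mul_assoc, ← Matrix.mul_assoc, e2]
      have t1 : ((V' * P * V') * (V * (Tstar W)ᴴ * V)).trace
          = ((V' * P * V') * (Tstar W)ᴴ).trace := by
        rw [e7, Matrix.trace_mul_comm, ← Matrix.mul_assoc, e1]
      have h2 : ((V' * P * V') * (Tstar W)ᴴ).trace = 0 := by
        calc ((V' * P * V') * (Tstar W)ᴴ).trace
            = ((V' * P * V') * (V * (Tstar W)ᴴ * V)).trace := t1.symm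
          _ = ((V' * P * V') * (W * (V * Tstar W * V)ᴴ * W)).trace := by
              conv_lhs => rw [← e4, e6]
          _ = 0 := by
              rw [← Matrix.mul_assoc, ← Matrix.mul_assoc, hBW, Matrix.zero_mul,
                Matrix.zero_mul, Matrix.trace_zero]
      have htr : (W * T (V' * P * V')).trace = 0 := by
        rw [Matrix.trace_mul_comm]
        have h1 := hadj (V' * P * V') W
        rw [hWH] at h1
        rw [h1]; exact h2
      obtain ⟨hTW0, hWT0⟩ := aux_psd_mul_proj hTBpsd hWH hWI htr
      have hVeq : V = V' + W := by rw [hV'def]; abel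
      have h5 : V * T (V' * P * V') = V' * T (V' * P * V') := by
        calc V * T (V' * P * V') = (V' + W) * T (V' * P * V') := by rw [← hVeq]
          _ = V' * T (V' * P * V') + W * T (V' * P * V') := Matrix.add_mul _ _ _
          _ = V' * T (V' * P * V') := by rw [hWT0, add_zero]
      have h6 : T (V' * P * V') * V = T (V' * P * V') * V' := by
        calc T (V' * P * V') * V = T (V' * P * V') * (V' + W) := by rw [← hVeq]
          _ = T (V' * P * V') * V' + T (V' * P * V') * W := Matrix.mul_add _ _ _
          _ = T (V' * P * V') * V' := by rw [hTW0, add_zero]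
      calc T (V' * P * V') = V * T (V' * P * V') * V := hTB_V
        _ = V' * T (V' * P * V') * V' := by
            rw [Matrix.mul_assoc, h6, ← Matrix.mul_assoc, h5]
    intro X
    show T (V' * X * V') = V' * T (V' * X * V') * V'
    have hz := aux_ext_psd
      (f := fun Y => T (V' * Y * V') - V' * T (V' * Y * V') * V')
      (fun A B => by simp only [Matrix.mul_add, Matrix.add_mul, hlin.map_add]; abel)
      (fun c A => by simp only [mul_smul_comm, smul_mul_assoc, hlin.map_smul, smul_sub])
      (fun P hP => sub_eq_zero.mpr (key P hP)) X
    exact sub_eq_zero.mp hz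
  -- Assemble the equivalence.
  constructor
  · intro hirr W hW hrange hleaves
    obtain ⟨habs1, habs2⟩ := aux_proj_absorb ⟨hVH, hVI⟩ hW hrange
    have hLT := transfer2 W hW habs1 habs2 hleaves
    have hproj : IsOrthProj (V - W) := by
      refine ⟨?_, ?_⟩
      · show (V - W)ᴴ = V - W
        rw [Matrix.conjTranspose_sub, hVHe, hW.1.eq]
      · rw [Matrix.sub_mul, Matrix.mul_sub, Matrix.mul_sub, hVI, habs1, habs2, hW.2]
        abel
    have hrange' : LinearMap.range (V - W).mulVecLin ≤ LinearMap.range V.mulVecLin := by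
      have hfac : V * (V - W) = V - W := by rw [Matrix.mul_sub, hVI, habs1]
      rintro x ⟨y, rfl⟩
      refine ⟨(V - W) *ᵥ y, ?_⟩
      simp only [Matrix.mulVecLin_apply]
      rw [Matrix.mulVec_mulVec, hfac]
    rcases hirr (V - W) hproj hrange' hLT with h | h
    · right; exact sub_eq_self.mp h
    · left; exact (sub_eq_zero.mp h).symm
  · intro hirr V' hV' hrange hleaves
    obtain ⟨habs1, habs2⟩ := aux_proj_absorb ⟨hVH, hVI⟩ hV' hrange
    have hLS := transfer1 V' hV' habs1 habs2 hleaves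
    have hproj : IsOrthProj (V - V') := by
      refine ⟨?_, ?_⟩
      · show (V - V')ᴴ = V - V'
        rw [Matrix.conjTranspose_sub, hVHe, hV'.1.eq]
      · rw [Matrix.sub_mul, Matrix.mul_sub, Matrix.mul_sub, hVI, habs1, habs2, hV'.2]
        abel
    have hrange' : LinearMap.range (V - V').mulVecLin ≤ LinearMap.range V.mulVecLin := by
      have hfac : V * (V - V') = V - V' := by rw [Matrix.mul_sub, hVI, habs1]
      rintro x ⟨y, rfl⟩
      refine ⟨(V - V') *ᵥ y, ?_⟩
      simp only [Matrix.mulVecLin_apply]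
      rw [Matrix.mulVec_mulVec, hfac]
    rcases hirr (V - V') hproj hrange' hLS with h | h
    · right; exact sub_eq_self.mp h
    · left; exact (sub_eq_zero.mp h).symm


end
end
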